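/- For any positive integer j and any graph G, w_j(G) ≤ γ_j(G) ≤ z_j(G), where z_j and w_j are the degree-sequence indices defined relative to minimum j-dominating sets. -/

import Mathlib

open Finset

namespace DSI

variable {V : Type*} (G : SimpleGraph V) [Fintype V] [DecidableEq V] [DecidableRel G.Adj]

/-- The degree sequence of `G`, sorted in non-decreasing order. -/
def dseq : List ℕ := (Finset.univ.val.map (fun v => G.degree v)).sort (· ≤ ·)

/-- The sum of the `k` smallest degrees, `Σ_{i=1}^k d_i`. -/
def sumSmallest (k : ℕ) : ℕ := ((dseq G).take k).sum

/-- The sum of the `k` largest degrees, `Σ_{i=1}^k d_{n-i+1}`. -/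
def sumLargest (k : ℕ) : ℕ := ((dseq G).reverse.take k).sum

/-- The number of edges `m(G)`. -/
def esize : ℕ := G.edgeFinset.card

/-- `m[S]`: the number of edges of the subgraph induced by `S`. -/
def mOn (S : Finset V) : ℕ := (S.sym2.filter (fun e => e ∈ G.edgeSet)).card

/-- A set `I` is `j`-independent if every vertex of `I` has fewer than `j` neighbours in `I`,
i.e. the induced subgraph has maximum degree `< j`. -/
def JIndep (j : ℕ) (I : Finset V) : Prop := ∀ v ∈ I, (I.filter (G.Adj v)).card < j

/-- The `j`-independence number `α_j(G)`. -/
noncomputable def alphaJ (j : ℕ) : ℕ := sSup {k | ∃ I : Finset V, JIndep G j I ∧ I.card = k}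

/-- The family `F` of maximum `j`-independent sets. -/
noncomputable def maxJIndep (j : ℕ) : Set (Finset V) :=
  {S | JIndep G j S ∧ S.card = alphaJ G j}

/-- `max_{S ∈ F} (m[V−S] − m[S])`. -/
noncomputable def fU (j : ℕ) : ℤ :=
  sSup ((fun S : Finset V => (mOn G Sᶜ : ℤ) - (mOn G S : ℤ)) '' maxJIndep G j)

/-- `min_{S ∈ F} (m[V−S] − m[S])`. -/
noncomputable def fL (j : ℕ) : ℤ :=
  sInf ((fun S : Finset V => (mOn G Sᶜ : ℤ) - (mOn G S : ℤ)) '' maxJIndep G j)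

/-- The upper `j`-annihilation number `a_j(G)`. -/
noncomputable def aJ (j : ℕ) : ℕ :=
  sSup {k | k ≤ Fintype.card V ∧ (sumSmallest G k : ℤ) + fU G j ≤ (esize G : ℤ)}

/-- The lower `j`-annihilation number `c_j(G)`. -/
noncomputable def cJ (j : ℕ) : ℕ :=
  sInf {k | k ≤ Fintype.card V ∧ (esize G : ℤ) ≤ (sumLargest G k : ℤ) + fL G j}

/-- The annihilation number `a(G)`. -/
noncomputable def annihilation : ℕ :=
  sSup {k | k ≤ Fintype.card V ∧ sumSmallest G k ≤ esize G}

/-- An independent set. -/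
def IndepSet (I : Finset V) : Prop := ∀ v ∈ I, ∀ w ∈ I, ¬ G.Adj v w

/-- The independence number `α(G)`. -/
noncomputable def alpha : ℕ := sSup {k | ∃ I : Finset V, IndepSet G I ∧ I.card = k}

end DSI
/-- `D` is a `j`-dominating set: every vertex outside `D` has at least `j` neighbours
in `D`. -/
def DSI.JDom {V : Type*} (G : SimpleGraph V) [DecidableEq V] [DecidableRel G.Adj] (j : ℕ) (D : Finset V) : Prop :=
  ∀ v : V, v ∉ D → j ≤ (D.filter (fun w => G.Adj v w)).card

/-- The `j`-domination number `γ_j(G)`. -/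
noncomputable def DSI.gammaJ {V : Type*} (G : SimpleGraph V) [Fintype V]
    [DecidableEq V] [DecidableRel G.Adj] (j : ℕ) : ℕ :=
  sInf {k | ∃ D : Finset V, DSI.JDom G j D ∧ D.card = k}

/-- The family of minimum `j`-dominating sets. -/
noncomputable def DSI.minJDom {V : Type*} (G : SimpleGraph V) [Fintype V]
    [DecidableEq V] [DecidableRel G.Adj] (j : ℕ) : Set (Finset V) :=
  {D | DSI.JDom G j D ∧ D.card = DSI.gammaJ G j}

/-- `max_{S ∈ F} (m[V−S] − m[S])` over minimum `j`-dominating sets. -/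
noncomputable def DSI.fUdom {V : Type*} (G : SimpleGraph V) [Fintype V]
    [DecidableEq V] [DecidableRel G.Adj] (j : ℕ) : ℤ :=
  sSup ((fun S : Finset V => (DSI.mOn G Sᶜ : ℤ) - (DSI.mOn G S : ℤ)) '' DSI.minJDom G j)

/-- `min_{S ∈ F} (m[V−S] − m[S])` over minimum `j`-dominating sets. -/
noncomputable def DSI.fLdom {V : Type*} (G : SimpleGraph V) [Fintype V]
    [DecidableEq V] [DecidableRel G.Adj] (j : ℕ) : ℤ :=
  sInf ((fun S : Finset V => (DSI.mOn G Sᶜ : ℤ) - (DSI.mOn G S : ℤ)) '' DSI.minJDom G j)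

/-- `z_j(G) = max { k | Σ_{i=1}^k d_i + max_{S∈F}(m[V−S]−m[S]) ≤ m(G) }`. -/
noncomputable def DSI.zJ {V : Type*} (G : SimpleGraph V) [Fintype V]
    [DecidableEq V] [DecidableRel G.Adj] (j : ℕ) : ℕ :=
  sSup {k | k ≤ Fintype.card V ∧
    (DSI.sumSmallest G k : ℤ) + DSI.fUdom G j ≤ (DSI.esize G : ℤ)}

/-- `w_j(G) = min { k | Σ_{i=1}^k d_{n-i+1} + min_{S∈F}(m[V−S]−m[S]) ≥ m(G) }`. -/
noncomputable def DSI.wJ {V : Type*} (G : SimpleGraph V) [Fintype V]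
    [DecidableEq V] [DecidableRel G.Adj] (j : ℕ) : ℕ :=
  sInf {k | k ≤ Fintype.card V ∧
    (DSI.esize G : ℤ) ≤ (DSI.sumLargest G k : ℤ) + DSI.fLdom G j}

-- sorted take lemma
lemma aux_take_le (l : List ℕ) (hl : l.Pairwise (· ≤ ·)) :
    ∀ t : Multiset ℕ, t ≤ ↑l → (l.take (Multiset.card t)).sum ≤ t.sum := by
  induction l with
  | nil =>
    intro t h
    have : t = 0 := Multiset.le_zero.mp (by simpa using h)
    simp [this]
  | cons a l ih =>
    intro t h
    rcases eq_or_ne t 0 with rfl | ht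
    · simp
    by_cases ha : a ∈ t
    · have h' : t.erase a ≤ ↑l := by
        have := Multiset.erase_le_erase a h
        simpa using this
      have hcard : Multiset.card t = Multiset.card (t.erase a) + 1 := by
        rw [Multiset.card_erase_of_mem ha]
        exact (Nat.succ_pred_eq_of_pos (Multiset.card_pos.mpr ht)).symm
      have hsum : t.sum = a + (t.erase a).sum := by
        conv_lhs => rw [← Multiset.cons_erase ha]
        simp
      rw [hcard, List.take_succ_cons, List.sum_cons, hsum]
      exact Nat.add_le_add_left (ih (List.pairwise_cons.mp hl).2 _ h') a
    · have h' : t ≤ ↑l := by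
        rw [← Multiset.cons_coe] at h
        rw [Multiset.le_iff_count] at h ⊢
        intro x
        have hx := h x
        by_cases hxa : x = a
        · subst hxa
          simp [Multiset.count_eq_zero_of_notMem ha]
        · rwa [Multiset.count_cons_of_ne hxa] at hx
      obtain ⟨k, hk⟩ : ∃ k, Multiset.card t = k + 1 := by
        have : 1 ≤ Multiset.card t := Multiset.card_pos.mpr ht
        exact ⟨Multiset.card t - 1, by omega⟩
      have hkl : k + 1 ≤ l.length := by
        have := Multiset.card_le_card h'
        simp only [Multiset.coe_card] at this
        omega
      have hle := ih (List.pairwise_cons.mp hl).2 t h'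
      rw [hk] at hle ⊢
      rw [List.take_succ_cons, List.sum_cons]
      have hget : l[k]? = some l[k] := List.getElem?_eq_getElem (by omega)
      have hstep : (l.take (k+1)).sum = (l.take k).sum + l[k] := by
        rw [List.take_succ, hget]
        simp only [Option.toList_some, List.sum_append, List.sum_cons, List.sum_nil]
        omega
      have hak : a ≤ l[k] := (List.pairwise_cons.mp hl).1 _ (l.getElem_mem _)
      omega


section GraphAux

open DSI

variable {V : Type*} (G : SimpleGraph V) [Fintype V] [DecidableEq V] [DecidableRel G.Adj]

lemma mOn_insert (v : V) (S : Finset V) (hv : v ∉ S) :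
    mOn G (insert v S) = mOn G S + (S.filter (G.Adj v)).card := by
  classical
  unfold mOn
  rw [Finset.sym2_insert, Finset.filter_union]
  have hdisj : Disjoint ((((insert v S).image fun b => s(v, b))).filter (fun e => e ∈ G.edgeSet))
      (S.sym2.filter (fun e => e ∈ G.edgeSet)) := by
    rw [Finset.disjoint_left]
    intro e he1 he2
    simp only [Finset.mem_filter, Finset.mem_image] at he1 he2
    obtain ⟨⟨b, _, rfl⟩, _⟩ := he1
    have := (Finset.mk_mem_sym2_iff.mp he2.1).1
    exact hv this
  rw [Finset.card_union_of_disjoint hdisj]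
  have himg : (((insert v S).image fun b => s(v, b))).filter (fun e => e ∈ G.edgeSet)
      = (S.filter (G.Adj v)).image (fun b => s(v, b)) := by
    ext e
    simp only [Finset.mem_filter, Finset.mem_image, Finset.mem_insert]
    constructor
    · rintro ⟨⟨b, hb, rfl⟩, he⟩
      rw [SimpleGraph.mem_edgeSet] at he
      refine ⟨b, ⟨?_, he⟩, rfl⟩
      rcases hb with rfl | hb
      · exact absurd he (G.irrefl)
      · exact hb
    · rintro ⟨b, ⟨hb, hadj⟩, rfl⟩
      exact ⟨⟨b, Or.inr hb, rfl⟩, (G.mem_edgeSet).mpr hadj⟩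
  rw [himg, Finset.card_image_of_injective _ (fun b c h => by
    simpa using Sym2.congr_right.mp h)]
  omega

lemma degree_eq_filter (v : V) : G.degree v = (Finset.univ.filter (G.Adj v)).card := by
  rw [← SimpleGraph.card_neighborFinset_eq_degree]
  congr 1
  ext w
  simp [SimpleGraph.mem_neighborFinset]

lemma mOn_univ : mOn G (Finset.univ : Finset V) = esize G := by
  unfold mOn esize
  rw [Finset.sym2_univ]
  congr 1
  ext e
  simp [SimpleGraph.mem_edgeFinset, SimpleGraph.edgeFinset]

lemma key_identity (S : Finset V) :
    (∑ v ∈ S, G.degree v) + mOn G Sᶜ = esize G + mOn G S := by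
  classical
  induction S using Finset.induction_on with
  | empty => simp [mOn_univ, show (mOn G (∅ : Finset V)) = 0 from by simp [mOn]]
  | @insert v S hv ih =>
    have hvc : v ∈ Sᶜ := Finset.mem_compl.mpr hv
    set T := Sᶜ.erase v with hT
    have hvT : v ∉ T := Finset.notMem_erase _ _
    have hSc : Sᶜ = insert v T := (Finset.insert_erase hvc).symm
    have hcompl : (insert v S)ᶜ = T := by
      rw [hT, Finset.compl_insert]
    have hmSc : mOn G Sᶜ = mOn G T + (T.filter (G.Adj v)).card := by
      rw [hSc]; exact mOn_insert G v T hvT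
    have hfilter : T.filter (G.Adj v) = Sᶜ.filter (G.Adj v) := by
      ext w
      simp only [hT, Finset.mem_filter, Finset.mem_erase]
      constructor
      · rintro ⟨⟨_, hw⟩, ha⟩; exact ⟨hw, ha⟩
      · rintro ⟨hw, ha⟩; exact ⟨⟨(G.ne_of_adj ha).symm, hw⟩, ha⟩
    have hdeg : G.degree v = (S.filter (G.Adj v)).card + (Sᶜ.filter (G.Adj v)).card := by
      rw [degree_eq_filter]
      rw [← Finset.card_union_of_disjoint (Finset.disjoint_filter_filter
        (disjoint_compl_right))]
      congr 1
      rw [← Finset.filter_union, Finset.union_compl]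
    rw [Finset.sum_insert hv, hcompl, mOn_insert G v S hv]
    rw [hfilter] at hmSc
    omega

lemma sumSmallest_le_sum (S : Finset V) :
    sumSmallest G S.card ≤ ∑ v ∈ S, G.degree v := by
  classical
  have hsub : S.val.map (fun v => G.degree v) ≤ Finset.univ.val.map (fun v => G.degree v) :=
    Multiset.map_le_map (Finset.val_le_iff.mpr (Finset.subset_univ S))
  have h := aux_take_le (dseq G) (Multiset.pairwise_sort _ _) (S.val.map (fun v => G.degree v))
    (by rw [dseq, Multiset.sort_eq]; exact hsub)
  rw [Multiset.card_map] at h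
  rw [sumSmallest, Finset.sum_eq_multiset_sum]
  exact h

lemma dseq_length : (dseq G).length = Fintype.card V := by
  simp [dseq, Multiset.length_sort]

lemma dseq_sum : (dseq G).sum = ∑ v, G.degree v := by
  have : ((dseq G : Multiset ℕ)).sum = (Finset.univ.val.map (fun v => G.degree v)).sum := by
    rw [dseq, Multiset.sort_eq]
  rw [Finset.sum_eq_multiset_sum, ← this, Multiset.sum_coe]

lemma sumLargest_add (k : ℕ) (hk : k ≤ Fintype.card V) :
    sumLargest G k + sumSmallest G (Fintype.card V - k) = (dseq G).sum := by
  set l := dseq G with hl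
  have hlen : l.length = Fintype.card V := dseq_length G
  have h1 : sumSmallest G (Fintype.card V - k) = (l.reverse.drop k).sum := by
    have := List.reverse_take (l := l) (i := Fintype.card V - k)
    have h2 : (l.take (Fintype.card V - k)).reverse.sum = (l.reverse.drop (l.length - (Fintype.card V - k))).sum := by
      rw [this, hlen]
    rw [hlen] at h2
    have h3 : Fintype.card V - (Fintype.card V - k) = k := by omega
    rw [h3] at h2
    rw [sumSmallest, ← List.sum_reverse, ← hl]
    exact h2
  rw [sumLargest, ← hl, h1, ← List.sum_append, List.take_append_drop, List.sum_reverse]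

lemma sum_le_sumLargest (S : Finset V) :
    ∑ v ∈ S, G.degree v ≤ sumLargest G S.card := by
  have hsplit : (∑ v ∈ S, G.degree v) + ∑ v ∈ Sᶜ, G.degree v = ∑ v, G.degree v :=
    Finset.sum_add_sum_compl S _
  have hB := sumSmallest_le_sum G Sᶜ
  have hcard : Sᶜ.card = Fintype.card V - S.card := Finset.card_compl S
  have hk : S.card ≤ Fintype.card V := Finset.card_le_univ S
  have hEq := sumLargest_add G S.card hk
  rw [dseq_sum] at hEq
  rw [hcard] at hB
  omega

end GraphAux

theorem wJ_le_gammaJ_le_zJ {V : Type*} (G : SimpleGraph V) [Fintype V]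
    [DecidableEq V] [DecidableRel G.Adj] (j : ℕ) (hj : 1 ≤ j) :
    DSI.wJ G j ≤ DSI.gammaJ G j ∧ DSI.gammaJ G j ≤ DSI.zJ G j := by
  classical
  open DSI in
  have huniv : JDom G j (Finset.univ : Finset V) := fun v hv => absurd (Finset.mem_univ v) hv
  have hne : {k | ∃ D : Finset V, JDom G j D ∧ D.card = k}.Nonempty :=
    ⟨(Finset.univ : Finset V).card, Finset.univ, huniv, rfl⟩
  obtain ⟨D, hD, hDcard⟩ : ∃ D : Finset V, JDom G j D ∧ D.card = gammaJ G j :=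
    Nat.sInf_mem hne
  have hFne : (minJDom G j).Nonempty := ⟨D, hD, hDcard⟩
  have himgU : ((fun S : Finset V => (mOn G Sᶜ : ℤ) - (mOn G S : ℤ)) '' minJDom G j).Nonempty :=
    hFne.image _
  have hfin : ((fun S : Finset V => (mOn G Sᶜ : ℤ) - (mOn G S : ℤ)) '' minJDom G j).Finite :=
    Set.toFinite _
  -- zJ part
  obtain ⟨SU, hSU, hSUval⟩ : ∃ S ∈ minJDom G j,
      (mOn G Sᶜ : ℤ) - (mOn G S : ℤ) = fUdom G j := himgU.csSup_mem hfin
  have hSUcard : SU.card = gammaJ G j := hSU.2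
  have hγn : gammaJ G j ≤ Fintype.card V := hSUcard ▸ Finset.card_le_univ SU
  have hkeyU := key_identity G SU
  have hBU := sumSmallest_le_sum G SU
  have hzmem : gammaJ G j ∈ {k | k ≤ Fintype.card V ∧
      (sumSmallest G k : ℤ) + fUdom G j ≤ (esize G : ℤ)} := by
    refine ⟨hγn, ?_⟩
    rw [← hSUval, ← hSUcard]
    have h1 : (sumSmallest G SU.card : ℤ) ≤ (∑ v ∈ SU, G.degree v : ℤ) := by exact_mod_cast hBU
    have h2 : ((∑ v ∈ SU, G.degree v : ℕ) : ℤ) + (mOn G SUᶜ : ℤ) = (esize G : ℤ) + (mOn G SU : ℤ) := by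
      exact_mod_cast congrArg (Nat.cast : ℕ → ℤ) hkeyU
    push_cast at h1 h2 ⊢
    linarith
  have hz : gammaJ G j ≤ zJ G j := by
    refine le_csSup ⟨Fintype.card V, fun k hk => hk.1⟩ hzmem
  -- wJ part
  obtain ⟨SL, hSL, hSLval⟩ : ∃ S ∈ minJDom G j,
      (mOn G Sᶜ : ℤ) - (mOn G S : ℤ) = fLdom G j := himgU.csInf_mem hfin
  have hSLcard : SL.card = gammaJ G j := hSL.2
  have hkeyL := key_identity G SL
  have hCL := sum_le_sumLargest G SL
  have hwmem : gammaJ G j ∈ {k | k ≤ Fintype.card V ∧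
      (esize G : ℤ) ≤ (sumLargest G k : ℤ) + fLdom G j} := by
    refine ⟨hSLcard ▸ Finset.card_le_univ SL, ?_⟩
    rw [← hSLval, ← hSLcard]
    have h1 : ((∑ v ∈ SL, G.degree v : ℕ) : ℤ) ≤ (sumLargest G SL.card : ℤ) := by exact_mod_cast hCL
    have h2 : ((∑ v ∈ SL, G.degree v : ℕ) : ℤ) + (mOn G SLᶜ : ℤ) = (esize G : ℤ) + (mOn G SL : ℤ) := by
      exact_mod_cast congrArg (Nat.cast : ℕ → ℤ) hkeyL
    push_cast at h1 h2 ⊢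
    linarith
  exact ⟨Nat.sInf_le hwmem, hz⟩
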